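/- Let F be a field, D a division ring that is an F-algebra, and V a nonzero D-module that is a vector space over D of infinite dimension (i.e., V is not finite-dimensional over D). Let A = Module.End D V, the F-algebra of D-linear endomorphisms of V. Then for every n ≥ 1 and every family λ : S_n → F of scalars, not all zero, every T ∈ A can be written as T = Σ_{σ ∈ S_n} λ_σ · T_{σ(1)} ∘ T_{σ(2)} ∘ ⋯ ∘ T_{σ(n)} for some T_1, …, T_n ∈ A. -/

import Mathlib

open Finsupp

namespace Stmt1Aux

variable {F : Type*} [Field F] {D : Type*} [DivisionRing D] [Algebra F D]
  {V : Type*} [AddCommGroup V] [Module D V] [Module F V]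
  [IsScalarTower F D V] [SMulCommClass D F V]

/-- Shift by `k` on `ℤ →₀ V`. -/
noncomputable def U (D V) [DivisionRing D] [AddCommGroup V] [Module D V] (k : ℤ) :
    (ℤ →₀ V) →ₗ[D] (ℤ →₀ V) :=
  (Finsupp.domLCongr (Equiv.addRight k) : (ℤ →₀ V) ≃ₗ[D] (ℤ →₀ V)).toLinearMap

theorem U_single (k j : ℤ) (v : V) :
    U D V k (Finsupp.single j v) = Finsupp.single (j + k) v := by
  simp [U]

theorem U_apply (k : ℤ) (w : ℤ →₀ V) (m : ℤ) : (U D V k w) m = w (m - k) := by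
  rw [U]
  rw [show ((Finsupp.domLCongr (M := V) (R := D) (Equiv.addRight k)).toLinearMap w) m
      = w ((Equiv.addRight k).symm m) from rfl]
  congr 1


theorem U_U (k l : ℤ) (w : ℤ →₀ V) : U D V k (U D V l w) = U D V (l + k) w := by
  ext m
  rw [U_apply, U_apply, U_apply]
  congr 1
  ring

theorem U_zero (w : ℤ →₀ V) : U D V 0 w = w := by
  ext m; rw [U_apply]; congr 1; ring


theorem fsmul_ne_zero (D : Type*) [DivisionRing D] [Algebra F D] [Module D V]
    [IsScalarTower F D V] {a : F} {v : V} (ha : a ≠ 0) (hv : v ≠ 0) : a • v ≠ 0 := by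
  rw [← algebraMap_smul D a v]
  refine smul_ne_zero (fun h0 => ha ((algebraMap F D).injective (h0.trans (map_zero _).symm))) hv

theorem shiftSum_ker {ι : Type*} [DecidableEq ι] (s : Finset ι) (k : ι → ℤ) (a : ι → F)
    (hk : Set.InjOn k s) (i0 : ι) (hi0 : i0 ∈ s) (ha : a i0 ≠ 0) :
    LinearMap.ker (∑ i ∈ s, a i • U D V (k i)) = ⊥ := by
  classical
  rw [LinearMap.ker_eq_bot']
  intro w hw
  by_contra hw0
  have hs' : i0 ∈ s.filter (fun i => a i ≠ 0) := Finset.mem_filter.mpr ⟨hi0, ha⟩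
  set s' := s.filter (fun i => a i ≠ 0) with hs'def
  have himg : (s'.image k).Nonempty := ⟨k i0, Finset.mem_image_of_mem k hs'⟩
  set K := (s'.image k).max' himg with hK
  obtain ⟨i1, hi1, hki1⟩ := Finset.mem_image.mp ((s'.image k).max'_mem himg)
  have hsupp : w.support.Nonempty := Finsupp.support_nonempty_iff.mpr hw0
  set j := w.support.max' hsupp with hj
  have hval : ((∑ i ∈ s, a i • U D V (k i)) w) (j + K) = a i1 • w j := by
    rw [LinearMap.sum_apply, Finsupp.finset_sum_apply]
    have hterm : ∀ i ∈ s, ((a i • U D V (k i)) w) (j + K) = a i • w (j + K - k i) := by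
      intro i _
      rw [LinearMap.smul_apply, Finsupp.smul_apply, U_apply]
    rw [Finset.sum_congr rfl hterm]
    rw [Finset.sum_eq_single_of_mem i1 (Finset.mem_of_mem_filter i1 hi1)]
    · rw [hki1]
      congr 1
      rw [← hK]; ring
    · intro i hi hne
      by_cases hai : a i = 0
      · rw [hai, zero_smul]
      · have hi' : i ∈ s' := Finset.mem_filter.mpr ⟨hi, hai⟩
        have hle : k i ≤ K := Finset.le_max' _ _ (Finset.mem_image_of_mem k hi')
        have hlt : k i < K := lt_of_le_of_ne hle (fun he => hne (hk (Finset.mem_of_mem_filter i hi') (Finset.mem_of_mem_filter i1 hi1) (he.trans hki1.symm)))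
        have : w (j + K - k i) = 0 := by
          apply Finsupp.notMem_support_iff.mp
          intro hmem
          have := Finset.le_max' w.support _ hmem
          rw [← hj] at this
          omega
        rw [this, smul_zero]
  rw [hw] at hval
  have hwj : w j ≠ 0 := Finsupp.mem_support_iff.mp (w.support.max'_mem hsupp)
  have hai1 : a i1 ≠ 0 := (Finset.mem_filter.mp hi1).2
  exact fsmul_ne_zero D hai1 hwj hval.symm


def mexp (N : ℕ) (i : Fin (N+1)) (s : ℕ) : ℤ := (i : ℕ) * ((N : ℤ)+2)^s

def expSum (N : ℕ) : List (Fin (N+1)) → ℕ → ℤ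
  | [], _ => 0
  | i :: l, q => mexp N i (q + l.length) + expSum N l q

theorem expSum_concat (N : ℕ) (l : List (Fin (N+1))) (a : Fin (N+1)) (q : ℕ) :
    expSum N (l ++ [a]) q = ((a : ℕ) : ℤ) * ((N : ℤ)+2)^q + expSum N l (q+1) := by
  induction l generalizing q with
  | nil => simp [expSum, mexp]
  | cons x l ih =>
      rw [List.cons_append, expSum, ih]
      rw [expSum]
      have : q + (l ++ [a]).length = q + 1 + l.length := by
        simp [List.length_append]; omega
      rw [this]
      ring

theorem expSum_dvd (N : ℕ) (l : List (Fin (N+1))) (q : ℕ) :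
    ((N : ℤ)+2)^q ∣ expSum N l q := by
  induction l with
  | nil => exact dvd_zero _
  | cons x l ih =>
      rw [expSum]
      exact dvd_add (Dvd.dvd.mul_left (pow_dvd_pow _ (Nat.le_add_right q _)) _) ih

theorem expSum_injOn (N : ℕ) (l : List (Fin (N+1))) : ∀ (l' : List (Fin (N+1))) (q : ℕ),
    l.length = l'.length → expSum N l q = expSum N l' q → l = l' := by
  induction l using List.reverseRecOn with
  | nil =>
      intro l' q hlen _
      exact (List.eq_nil_of_length_eq_zero hlen.symm).symm
  | append_singleton l a ih =>
      intro l' q hlen heq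
      rcases List.eq_nil_or_concat l' with rfl | ⟨t', a', rfl⟩
      · simp at hlen
      · rw [List.concat_eq_append] at hlen heq ⊢
        rw [expSum_concat, expSum_concat] at heq
        set B : ℤ := (N : ℤ) + 2 with hB
        have hBpos : (0:ℤ) < B := by positivity
        have hd1 : B^(q+1) ∣ expSum N l (q+1) := expSum_dvd N l (q+1)
        have hd2 : B^(q+1) ∣ expSum N t' (q+1) := expSum_dvd N t' (q+1)
        have hdiff : B^(q+1) ∣ (((a:ℕ):ℤ) - ((a':ℕ):ℤ)) * B^q := by
          have h2 : (((a:ℕ):ℤ) - ((a':ℕ):ℤ)) * B^q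
              = expSum N t' (q+1) - expSum N l (q+1) := by linarith
          rw [h2]
          exact dvd_sub hd2 hd1
        have hpow : B^(q+1) = B * B^q := by ring
        rw [hpow] at hdiff
        have hBq : (B:ℤ)^q ≠ 0 := by positivity
        have hdvd : B ∣ (((a:ℕ):ℤ) - ((a':ℕ):ℤ)) := by
          have := (mul_dvd_mul_iff_right hBq).mp hdiff
          exact this
        obtain ⟨c, hc⟩ := hdvd
        have haN : ((a:ℕ):ℤ) ≤ N := by exact_mod_cast Nat.lt_succ_iff.mp a.isLt
        have haN' : ((a':ℕ):ℤ) ≤ N := by exact_mod_cast Nat.lt_succ_iff.mp a'.isLt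
        have ha0 : (0:ℤ) ≤ ((a:ℕ):ℤ) := Int.natCast_nonneg _
        have ha0' : (0:ℤ) ≤ ((a':ℕ):ℤ) := Int.natCast_nonneg _
        have hc0 : c = 0 := by
          rcases lt_trichotomy c 0 with h | h | h
          · nlinarith
          · exact h
          · nlinarith
        rw [hc0, mul_zero] at hc
        have haa : a = a' := by
          apply Fin.ext
          omega
        subst haa
        have hlen' : l.length = t'.length := by
          simp [List.length_append] at hlen
          omega
        have heq' : expSum N l (q+1) = expSum N t' (q+1) := by linarith
        rw [ih t' (q+1) hlen' heq']


def posP (N : ℕ) (σ : Equiv.Perm (Fin (N+1))) : ℕ := (σ.symm 0 : Fin (N+1)).val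

theorem posP_le (N : ℕ) (σ : Equiv.Perm (Fin (N+1))) : posP N σ ≤ N :=
  Nat.lt_succ_iff.mp (σ.symm 0).isLt

theorem posP_eq_zero_iff (N : ℕ) (σ : Equiv.Perm (Fin (N+1))) :
    posP N σ = 0 ↔ σ 0 = 0 := by
  constructor
  · intro h
    have h2 : σ.symm 0 = 0 := Fin.ext h
    conv_lhs => rw [← h2]
    rw [Equiv.apply_symm_apply]
  · intro h
    have : σ.symm 0 = 0 := by conv_lhs => rw [← h]
                              rw [Equiv.symm_apply_apply]
    simp [posP, this]

theorem sigma_ne_zero_of_ne (N : ℕ) (σ : Equiv.Perm (Fin (N+1))) {j : Fin (N+1)}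
    (hj : (j : ℕ) ≠ posP N σ) : σ j ≠ 0 := by
  intro h0
  apply hj
  have : j = σ.symm 0 := by rw [← h0, Equiv.symm_apply_apply]
  rw [this]; rfl

/-- exponent of the right-tail of the monomial of `σ`. -/
def Rexp (N : ℕ) (σ : Equiv.Perm (Fin (N+1))) (q : ℕ) : ℤ :=
  expSum N ((List.ofFn σ).drop (posP N σ + 1)) q

theorem perm_eq_of_drop (N : ℕ) (σ σ' : Equiv.Perm (Fin (N+1)))
    (h0 : σ 0 = 0) (h0' : σ' 0 = 0)
    (h : (List.ofFn σ).drop 1 = (List.ofFn σ').drop 1) : σ = σ' := by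
  apply Equiv.ext
  intro j
  by_cases hj : j = 0
  · rw [hj, h0, h0']
  · have hjv : 1 ≤ (j : ℕ) := Nat.one_le_iff_ne_zero.mpr (fun hv => hj (Fin.ext hv))
    have hjlt : (j : ℕ) - 1 < N := by
      have := j.isLt; omega
    have := congrArg (fun l : List (Fin (N+1)) => l[(j:ℕ)-1]?) h
    simp only [List.getElem?_drop, List.getElem?_ofFn] at this
    have harg : 1 + ((j:ℕ) - 1) = (j:ℕ) := by omega
    rw [harg] at this
    have hlt : (j:ℕ) < N + 1 := j.isLt
    simp only [List.ofFnNthVal, dif_pos hlt] at this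
    have := Option.some_injective _ this
    have hfin : (⟨(j:ℕ), hlt⟩ : Fin (N+1)) = j := Fin.ext rfl
    rwa [hfin] at this

theorem Rexp_injOn (N : ℕ) (q : ℕ) {σ σ' : Equiv.Perm (Fin (N+1))}
    (h0 : σ 0 = 0) (h0' : σ' 0 = 0) (h : Rexp N σ q = Rexp N σ' q) : σ = σ' := by
  have hp : posP N σ = 0 := (posP_eq_zero_iff N σ).mpr h0
  have hp' : posP N σ' = 0 := (posP_eq_zero_iff N σ').mpr h0'
  rw [Rexp, Rexp, hp, hp'] at h
  have hlen : ((List.ofFn σ).drop 1).length = ((List.ofFn σ').drop 1).length := by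
    simp
  exact perm_eq_of_drop N σ σ' h0 h0' (expSum_injOn N _ _ q hlen h)


variable (D V) in
noncomputable def xop (N : ℕ) (i : Fin (N+1)) : Module.End D (ℕ →₀ (ℤ →₀ V)) :=
  Finsupp.lsum ℕ fun s => Finsupp.lsingle (s+1) ∘ₗ U D V (mexp N i s)

theorem xop_single (N : ℕ) (i : Fin (N+1)) (s : ℕ) (w : ℤ →₀ V) :
    xop D V N i (Finsupp.single s w) = Finsupp.single (s+1) (U D V (mexp N i s) w) := by
  simp [xop]

theorem chain_eval (N : ℕ) (l : List (Fin (N+1))) (q : ℕ) (w : ℤ →₀ V) :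
    (l.map (xop D V N)).prod (Finsupp.single q w) =
      Finsupp.single (q + l.length) (U D V (expSum N l q) w) := by
  induction l with
  | nil => simp [expSum, U_zero]
  | cons i l ih =>
      rw [List.map_cons, List.prod_cons, Module.End.mul_apply, ih, xop_single, U_U]
      rw [expSum, add_comm (mexp N i (q + l.length)) (expSum N l q)]
      congr 1


variable (D V) in
noncomputable def Cmap (N : ℕ) (lam : Equiv.Perm (Fin (N+1)) → F) (q : ℕ) :
    (ℤ →₀ V) →ₗ[D] (ℤ →₀ V) :=
  ∑ σ : Equiv.Perm (Fin (N+1)), if σ 0 = 0 then lam σ • U D V (Rexp N σ q) else 0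

theorem Cmap_ker (N : ℕ) (lam : Equiv.Perm (Fin (N+1)) → F) (hlam0 : lam 1 ≠ 0) (q : ℕ) :
    LinearMap.ker (Cmap D V (F := F) N lam q) = ⊥ := by
  classical
  rw [Cmap, ← Finset.sum_filter]
  refine shiftSum_ker _ (fun σ => Rexp N σ q) lam ?_ 1 ?_ hlam0
  · intro σ hσ σ' hσ' h
    simp only [Finset.coe_filter, Set.mem_setOf_eq] at hσ hσ'
    exact Rexp_injOn N q hσ.2 hσ'.2 h
  · simp

open scoped Classical in
variable (D V) in
noncomputable def Cinv (N : ℕ) (lam : Equiv.Perm (Fin (N+1)) → F) (q : ℕ) :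
    (ℤ →₀ V) →ₗ[D] (ℤ →₀ V) :=
  if h : ∃ g : (ℤ →₀ V) →ₗ[D] (ℤ →₀ V), g ∘ₗ Cmap D V (F := F) N lam q = LinearMap.id
  then h.choose else 0

theorem Cinv_comp (N : ℕ) (lam : Equiv.Perm (Fin (N+1)) → F) (hlam0 : lam 1 ≠ 0) (q : ℕ) :
    Cinv D V (F := F) N lam q ∘ₗ Cmap D V (F := F) N lam q = LinearMap.id := by
  have hex : ∃ g : (ℤ →₀ V) →ₗ[D] (ℤ →₀ V), g ∘ₗ Cmap D V (F := F) N lam q = LinearMap.id :=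
    LinearMap.exists_leftInverse_of_injective _ (Cmap_ker N lam hlam0 q)
  classical
  rw [Cinv]
  rw [dif_pos hex]
  exact hex.choose_spec

variable (D V) in
noncomputable def Lmap (N : ℕ) (σ : Equiv.Perm (Fin (N+1))) : Module.End D (ℕ →₀ (ℤ →₀ V)) :=
  ((List.ofFn fun j => xop D V N (σ j)).take (posP N σ)).prod

theorem Lmap_of_pos_zero (N : ℕ) (σ : Equiv.Perm (Fin (N+1))) (h : posP N σ = 0) :
    Lmap D V N σ = 1 := by
  rw [Lmap, h, List.take_zero, List.prod_nil]

variable (D V) in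
noncomputable def Xcol (N : ℕ) (lam : Equiv.Perm (Fin (N+1)) → F)
    (T : Module.End D (ℕ →₀ (ℤ →₀ V))) : ℕ → (ℤ →₀ V) →ₗ[D] (ℕ →₀ (ℤ →₀ V))
  | m =>
    if hm : N ≤ m then
      ((T ∘ₗ Finsupp.lsingle (m - N)) -
        ∑ σ : Equiv.Perm (Fin (N+1)),
          if h : σ 0 = 0 then 0
          else lam σ • (Lmap D V N σ ∘ₗ Xcol N lam T (m - posP N σ) ∘ₗ
            U D V (Rexp N σ (m - N))))
        ∘ₗ Cinv D V (F := F) N lam (m - N)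
    else 0
  termination_by m => m
  decreasing_by
    have h1 : posP N σ ≠ 0 := fun hp => h ((posP_eq_zero_iff N σ).mp hp)
    have h2 : 1 ≤ ((σ 0 : Fin (N+1)) : ℕ) :=
      Nat.one_le_iff_ne_zero.mpr (fun hv => h (Fin.ext hv))
    have h3 : ((σ 0 : Fin (N+1)) : ℕ) ≤ N := Nat.lt_succ_iff.mp (σ 0).isLt
    omega


variable (D V) in
noncomputable def Xfull (N : ℕ) (lam : Equiv.Perm (Fin (N+1)) → F)
    (T : Module.End D (ℕ →₀ (ℤ →₀ V))) : Module.End D (ℕ →₀ (ℤ →₀ V)) :=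
  Finsupp.lsum ℕ (Xcol D V N lam T)

variable (D V) in
noncomputable def TsF (N : ℕ) (lam : Equiv.Perm (Fin (N+1)) → F)
    (T : Module.End D (ℕ →₀ (ℤ →₀ V))) : Fin (N+1) → Module.End D (ℕ →₀ (ℤ →₀ V)) :=
  fun i => if i = 0 then Xfull D V N lam T else xop D V N i

theorem monomial_eval (N : ℕ) (lam : Equiv.Perm (Fin (N+1)) → F)
    (T : Module.End D (ℕ →₀ (ℤ →₀ V))) (σ : Equiv.Perm (Fin (N+1))) (q : ℕ) (w : ℤ →₀ V) :
    (List.ofFn fun j => TsF D V N lam T (σ j)).prod (Finsupp.single q w)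
      = Lmap D V N σ (Xcol D V N lam T (q + (N - posP N σ))
          (U D V (Rexp N σ q) w)) := by
  set p := posP N σ with hp
  have hpN : p ≤ N := posP_le N σ
  have hplt : p < N + 1 := by omega
  set L := List.ofFn fun j => TsF D V N lam T (σ j) with hL
  have hLlen : L.length = N + 1 := by simp [hL]
  have hplt' : p < L.length := by omega
  have hget : L[p]'hplt' = Xfull D V N lam T := by
    simp only [hL, List.getElem_ofFn]
    have hfin : σ ⟨p, hplt⟩ = 0 := by
      have : (⟨p, hplt⟩ : Fin (N+1)) = σ.symm 0 := Fin.ext rfl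
      rw [this, Equiv.apply_symm_apply]
    rw [TsF, hfin, if_pos rfl]
  have h1 : L.prod = (L.take p).prod * (L[p]'hplt' * (L.drop (p+1)).prod) := by
    conv_lhs => rw [← List.take_append_drop p L, List.drop_eq_getElem_cons hplt']
    rw [List.prod_append, List.prod_cons]
  have htake : L.take p = (List.ofFn fun j => xop D V N (σ j)).take p := by
    apply List.ext_getElem (by simp [hL])
    intro t ht1 ht2
    have htp : t < p := by
      simp only [List.length_take, hLlen] at ht1
      omega
    simp only [hL, List.getElem_take, List.getElem_ofFn]
    have hne : σ ⟨t, by omega⟩ ≠ 0 := sigma_ne_zero_of_ne N σ (by simp; omega)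
    rw [TsF, if_neg hne]
  have hdrop : L.drop (p+1) = List.map (xop D V N) ((List.ofFn ⇑σ).drop (p+1)) := by
    apply List.ext_getElem (by simp [hL])
    intro t ht1 ht2
    have htp : p + 1 + t < N + 1 := by
      simp only [List.length_drop, hLlen] at ht1
      omega
    simp only [hL, List.getElem_drop, List.getElem_map, List.getElem_ofFn]
    have hne : σ ⟨p + 1 + t, htp⟩ ≠ 0 := sigma_ne_zero_of_ne N σ (by simp; omega)
    rw [TsF, if_neg hne]
  rw [h1, htake, hdrop, hget]
  rw [Module.End.mul_apply, Module.End.mul_apply, chain_eval]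
  have hlen2 : ((List.ofFn ⇑σ).drop (p+1)).length = N - p := by
    simp
  rw [hlen2]
  rw [Xfull, Finsupp.lsum_single]
  rw [Lmap]
  rfl


theorem Cmap_apply (N : ℕ) (lam : Equiv.Perm (Fin (N+1)) → F) (q : ℕ) (w : ℤ →₀ V) :
    Cmap D V (F := F) N lam q w
      = ∑ σ ∈ Finset.univ.filter (fun σ : Equiv.Perm (Fin (N+1)) => σ 0 = 0),
          lam σ • U D V (Rexp N σ q) w := by
  classical
  rw [Cmap, LinearMap.sum_apply, Finset.sum_filter]
  apply Finset.sum_congr rfl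
  intro σ _
  by_cases h : σ 0 = 0
  · rw [if_pos h, if_pos h, LinearMap.smul_apply]
  · rw [if_neg h, if_neg h, LinearMap.zero_apply]

theorem Xcol_eq (N : ℕ) (lam : Equiv.Perm (Fin (N+1)) → F)
    (T : Module.End D (ℕ →₀ (ℤ →₀ V))) (m : ℕ) (hm : N ≤ m) :
    Xcol D V N lam T m =
      ((T ∘ₗ Finsupp.lsingle (m - N)) -
        ∑ σ : Equiv.Perm (Fin (N+1)),
          if h : σ 0 = 0 then 0
          else lam σ • (Lmap D V N σ ∘ₗ Xcol D V N lam T (m - posP N σ) ∘ₗ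
            U D V (Rexp N σ (m - N))))
        ∘ₗ Cinv D V (F := F) N lam (m - N) := by
  classical
  conv_lhs => rw [Xcol]
  rw [dif_pos hm]

theorem model_surj (N : ℕ) (lam : Equiv.Perm (Fin (N+1)) → F) (hlam0 : lam 1 ≠ 0)
    (T : Module.End D (ℕ →₀ (ℤ →₀ V))) :
    ∃ Ts : Fin (N+1) → Module.End D (ℕ →₀ (ℤ →₀ V)),
      T = ∑ σ : Equiv.Perm (Fin (N+1)), lam σ • (List.ofFn fun j => Ts (σ j)).prod := by
  classical
  refine ⟨TsF D V N lam T, ?_⟩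
  symm
  apply Finsupp.lhom_ext
  intro q w
  rw [LinearMap.sum_apply]
  have hterm : ∀ σ ∈ (Finset.univ : Finset (Equiv.Perm (Fin (N+1)))),
      (lam σ • (List.ofFn fun j => TsF D V N lam T (σ j)).prod) (Finsupp.single q w)
        = lam σ • Lmap D V N σ (Xcol D V N lam T (q + (N - posP N σ))
            (U D V (Rexp N σ q) w)) := by
    intro σ _
    rw [LinearMap.smul_apply, monomial_eval]
  rw [Finset.sum_congr rfl hterm]
  rw [← Finset.sum_filter_add_sum_filter_not Finset.univ
    (fun σ : Equiv.Perm (Fin (N+1)) => σ 0 = 0)]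
  have hpart1 : ∑ σ ∈ Finset.univ.filter (fun σ : Equiv.Perm (Fin (N+1)) => σ 0 = 0),
      lam σ • Lmap D V N σ (Xcol D V N lam T (q + (N - posP N σ))
        (U D V (Rexp N σ q) w))
      = Xcol D V N lam T (q + N) (Cmap D V (F := F) N lam q w) := by
    rw [Cmap_apply, map_sum]
    apply Finset.sum_congr rfl
    intro σ hσ
    have h0 : σ 0 = 0 := (Finset.mem_filter.mp hσ).2
    have hp0 : posP N σ = 0 := (posP_eq_zero_iff N σ).mpr h0
    rw [hp0, Lmap_of_pos_zero N σ hp0, Module.End.one_apply, Nat.sub_zero,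
      LinearMap.map_smul_of_tower]
    
  rw [hpart1]
  have hq : q + N - N = q := by omega
  have hXc : Xcol D V N lam T (q + N) (Cmap D V (F := F) N lam q w)
      = T (Finsupp.single q w) -
        (∑ σ : Equiv.Perm (Fin (N+1)),
          if h : σ 0 = 0 then 0
          else lam σ • (Lmap D V N σ ∘ₗ Xcol D V N lam T (q + N - posP N σ) ∘ₗ
            U D V (Rexp N σ (q + N - N)))) w := by
    rw [Xcol_eq N lam T (q + N) (Nat.le_add_left N q), hq]
    rw [LinearMap.comp_apply]
    have hinv : Cinv D V (F := F) N lam q (Cmap D V (F := F) N lam q w) = w := by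
      have := LinearMap.ext_iff.mp (Cinv_comp (D := D) (V := V) N lam hlam0 q) w
      rwa [LinearMap.comp_apply, LinearMap.id_apply] at this
    rw [hinv, LinearMap.sub_apply, LinearMap.comp_apply, Finsupp.lsingle_apply]
  rw [hXc, hq]
  have hpart2 : (∑ σ : Equiv.Perm (Fin (N+1)),
          if h : σ 0 = 0 then 0
          else lam σ • (Lmap D V N σ ∘ₗ Xcol D V N lam T (q + N - posP N σ) ∘ₗ
            U D V (Rexp N σ q))) w
      = ∑ σ ∈ Finset.univ.filter (fun σ : Equiv.Perm (Fin (N+1)) => ¬ σ 0 = 0),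
          lam σ • Lmap D V N σ (Xcol D V N lam T (q + (N - posP N σ))
            (U D V (Rexp N σ q) w)) := by
    rw [LinearMap.sum_apply, Finset.sum_filter]
    apply Finset.sum_congr rfl
    intro σ _
    by_cases h : σ 0 = 0
    · rw [dif_pos h, if_neg (by simp [h]), LinearMap.zero_apply]
    · rw [dif_neg h, if_pos h]
      have harith : q + N - posP N σ = q + (N - posP N σ) := by
        have := posP_le N σ
        omega
      rw [LinearMap.smul_apply, LinearMap.comp_apply, LinearMap.comp_apply, harith]
  rw [hpart2]
  abel


theorem model_surj' (N : ℕ) (lam : Equiv.Perm (Fin (N+1)) → F) (hlam : lam ≠ 0)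
    (T : Module.End D (ℕ →₀ (ℤ →₀ V))) :
    ∃ Ts : Fin (N+1) → Module.End D (ℕ →₀ (ℤ →₀ V)),
      T = ∑ σ : Equiv.Perm (Fin (N+1)), lam σ • (List.ofFn fun j => Ts (σ j)).prod := by
  classical
  obtain ⟨σs, hσs⟩ := Function.ne_iff.mp hlam
  have h1 : (fun τ => lam (σs * τ)) 1 ≠ 0 := by simpa using hσs
  obtain ⟨Ts', hTs'⟩ := model_surj N (fun τ => lam (σs * τ)) h1 T
  refine ⟨fun i => Ts' (σs⁻¹ i), ?_⟩
  rw [hTs']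
  apply Fintype.sum_equiv (Equiv.mulLeft σs)
  intro τ
  have harg : (fun j => Ts' (σs⁻¹ ((Equiv.mulLeft σs τ) j))) = fun j => Ts' (τ j) := by
    funext j
    simp [Equiv.Perm.mul_apply]
  rw [harg]
  simp


theorem conj_list_prod {M₁ M₂ : Type*} [AddCommGroup M₁] [AddCommGroup M₂]
    [Module D M₁] [Module D M₂] (e : M₁ ≃ₗ[D] M₂) (l : List (Module.End D M₂)) :
    (l.map (fun ψ => e.symm.toLinearMap ∘ₗ ψ ∘ₗ e.toLinearMap)).prod
      = e.symm.toLinearMap ∘ₗ l.prod ∘ₗ e.toLinearMap := by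
  induction l with
  | nil =>
      apply LinearMap.ext; intro x
      simp
  | cons ψ l ih =>
      rw [List.map_cons, List.prod_cons, List.prod_cons, ih]
      apply LinearMap.ext; intro x
      simp [Module.End.mul_apply]

end Stmt1Aux

/-- Every nonzero multilinear noncommutative polynomial is surjective on the
`F`-algebra of `D`-linear endomorphisms of an infinite-dimensional vector space
`V` over a division ring `D`. -/
theorem stmt_1 (F : Type*) [Field F] (D : Type*) [DivisionRing D] [Algebra F D]
    (V : Type*) [AddCommGroup V] [Module D V] [Module F V]
    [IsScalarTower F D V] [SMulCommClass D F V]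
    [Nontrivial V] (hV : ¬ Module.Finite D V)
    (n : ℕ) (hn : 1 ≤ n)
    (lam : Equiv.Perm (Fin n) → F) (hlam : lam ≠ 0)
    (T : Module.End D V) :
    ∃ Ts : Fin n → Module.End D V,
      T = ∑ σ : Equiv.Perm (Fin n), lam σ • (List.ofFn fun j => Ts (σ j)).prod := by
  classical
  obtain ⟨N, rfl⟩ : ∃ N, n = N + 1 := ⟨n - 1, by omega⟩
  set ι := Module.Free.ChooseBasisIndex D V with hι
  let b : Module.Basis ι D V := Module.Free.chooseBasis D V
  haveI : Infinite ι := by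
    by_contra hfin
    rw [not_infinite_iff_finite] at hfin
    exact hV (Module.Finite.of_basis b)
  have hκ : Nonempty ((ℕ × ι) ≃ ι) := by
    rw [← Cardinal.eq, Cardinal.mk_prod, Cardinal.mk_nat, Cardinal.lift_aleph0,
      Cardinal.lift_id']
    have h := Cardinal.infinite_iff.mp (inferInstance : Infinite ι)
    exact Cardinal.mul_eq_right h h Cardinal.aleph0_ne_zero
  obtain ⟨κ0⟩ := hκ
  let κ : (ℕ × ℤ) × ι ≃ ι :=
    ((Denumerable.eqv (ℕ × ℤ)).prodCongr (Equiv.refl ι)).trans κ0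
  let κ' : ℕ × (ℤ × ι) ≃ ι := (Equiv.prodAssoc ℕ ℤ ι).symm.trans κ
  obtain ⟨e⟩ : Nonempty (V ≃ₗ[D] (ℕ →₀ (ℤ →₀ V))) :=
    ⟨b.repr ≪≫ₗ (Finsupp.domLCongr κ'.symm) ≪≫ₗ (Finsupp.finsuppProdLEquiv D) ≪≫ₗ
      (Finsupp.mapRange.linearEquiv (Finsupp.finsuppProdLEquiv D)) ≪≫ₗ
      (Finsupp.mapRange.linearEquiv (Finsupp.mapRange.linearEquiv b.repr.symm))⟩
  obtain ⟨Ts', hTs'⟩ := Stmt1Aux.model_surj' N lam hlam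
    (e.toLinearMap ∘ₗ T ∘ₗ e.symm.toLinearMap)
  refine ⟨fun i => e.symm.toLinearMap ∘ₗ Ts' i ∘ₗ e.toLinearMap, ?_⟩
  have hT : T = e.symm.toLinearMap ∘ₗ (e.toLinearMap ∘ₗ T ∘ₗ e.symm.toLinearMap)
      ∘ₗ e.toLinearMap := by
    apply LinearMap.ext; intro x
    simp
  rw [hT, hTs']
  have hsum : e.symm.toLinearMap ∘ₗ
      (∑ σ : Equiv.Perm (Fin (N+1)), lam σ • (List.ofFn fun j => Ts' (σ j)).prod)
        ∘ₗ e.toLinearMap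
      = ∑ σ : Equiv.Perm (Fin (N+1)), lam σ • (e.symm.toLinearMap ∘ₗ
          (List.ofFn fun j => Ts' (σ j)).prod ∘ₗ e.toLinearMap) := by
    apply LinearMap.ext; intro x
    simp only [LinearMap.comp_apply, LinearMap.sum_apply, LinearMap.smul_apply]
    rw [map_sum]
    apply Finset.sum_congr rfl
    intro σ _
    rw [LinearMap.map_smul_of_tower]
  rw [hsum]
  apply Finset.sum_congr rfl
  intro σ _
  congr 1
  have := Stmt1Aux.conj_list_prod e (List.ofFn fun j => Ts' (σ j))
  rw [List.map_ofFn] at this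
  rw [← this]
  rfl
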